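/- Fix y ∈ ℝ, τ ∈ (0,1) and ν > 0, and define Ψ₀(m) = ∫ [ (1/2)|y − η| + (τ − 1/2)(y − η) ] φ(η; m, ν²) dη. Then for every m ∈ ℝ, the second derivative of Ψ₀ with respect to m equals φ(y; m, ν²). -/

import Mathlib

open MeasureTheory Real Filter
open Topology

/-- Gaussian density with mean `m` and variance `ν ^ 2`, evaluated at `x`:
`φ(x; m, ν²) = (2πν²)^{-1/2} exp(−(x−m)²/(2ν²))`. -/
noncomputable def gpdf (m ν x : ℝ) : ℝ :=
  (Real.sqrt (2 * Real.pi * ν ^ 2))⁻¹ * Real.exp (-((x - m) ^ 2) / (2 * ν ^ 2))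

/-- Gaussian cumulative distribution function with mean `m` and variance `ν ^ 2`:
`Φ(c; m, ν²) = ∫_{−∞}^{c} φ(η; m, ν²) dη`. -/
noncomputable def gcdf (m ν c : ℝ) : ℝ := ∫ x in Set.Iio c, gpdf m ν x

section aux
variable {ν : ℝ}

lemma gpdf_eq_gaussian (m : ℝ) :
    gpdf m ν = ProbabilityTheory.gaussianPDFReal m ⟨ν ^ 2, sq_nonneg ν⟩ := rfl

lemma continuous_gpdf (m : ℝ) : Continuous (gpdf m ν) := by
  unfold gpdf; fun_prop

lemma gpdf_nonneg (m x : ℝ) : 0 ≤ gpdf m ν x := by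
  unfold gpdf; positivity

lemma integrable_gpdf (m : ℝ) : Integrable (gpdf m ν) := by
  rw [gpdf_eq_gaussian]; exact ProbabilityTheory.integrable_gaussianPDFReal _ _

lemma integral_gpdf (hν : 0 < ν) (m : ℝ) : ∫ x, gpdf m ν x = 1 := by
  rw [gpdf_eq_gaussian]
  refine ProbabilityTheory.integral_gaussianPDFReal_eq_one m ?_
  intro h
  exact (pow_ne_zero 2 hν.ne') (congrArg NNReal.toReal h)

lemma integrable_sub_mul_gpdf (hν : 0 < ν) (m : ℝ) :
    Integrable (fun x => (x - m) * gpdf m ν x) := by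
  have hb : (0:ℝ) < (2 * ν ^ 2)⁻¹ := by positivity
  have h1 : Integrable (fun x : ℝ =>
      (Real.sqrt (2 * Real.pi * ν ^ 2))⁻¹ * (x * Real.exp (-(2 * ν ^ 2)⁻¹ * x ^ 2))) :=
    (integrable_mul_exp_neg_mul_sq hb).const_mul _
  refine (h1.comp_sub_right m).congr (ae_of_all _ fun x => ?_)
  simp only [gpdf, neg_div, div_eq_inv_mul, neg_mul]
  ring_nf

lemma integrable_abs_mul_gpdf (hν : 0 < ν) (m c : ℝ) :
    Integrable (fun x => |c - x| * gpdf m ν x) := by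
  have h1 : Integrable (fun x => |c - m| * gpdf m ν x + |(x - m) * gpdf m ν x|) :=
    ((integrable_gpdf m).const_mul _).add (integrable_sub_mul_gpdf hν m).abs
  refine h1.mono' (((continuous_const.sub continuous_id).abs.mul
    (continuous_gpdf m)).aestronglyMeasurable) (ae_of_all _ fun x => ?_)
  have h0 := gpdf_nonneg (ν := ν) m x
  rw [Real.norm_eq_abs, abs_mul, abs_abs, abs_of_nonneg h0, abs_mul, abs_of_nonneg h0]
  have : |c - x| ≤ |c - m| + |x - m| := by
    have := abs_sub_le c m x
    rwa [abs_sub_comm m x] at this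
  nlinarith [abs_nonneg (c - x), abs_nonneg (c-m), abs_nonneg (x-m)]

lemma hasDerivAt_neg_gpdf (hν : 0 < ν) (m x : ℝ) :
    HasDerivAt (fun x => -(ν^2) * gpdf m ν x) ((x - m) * gpdf m ν x) x := by
  have inner : HasDerivAt (fun x : ℝ => -((x - m) ^ 2) / (2 * ν ^ 2))
      (-(2 * (x - m)) / (2 * ν ^ 2)) x := by
    exact (((hasDerivAt_id x).sub_const m).pow 2).neg.div_const _ |>.congr_deriv (by simp only [id_eq]; ring)
  have h := (inner.exp.const_mul (Real.sqrt (2 * Real.pi * ν ^ 2))⁻¹).const_mul (-(ν^2))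
  convert (config := { preTransparency := .default }) h using 1
  unfold gpdf
  have hs : Real.sqrt (2 * Real.pi * ν ^ 2) > 0 := by positivity
  field_simp

lemma tendsto_gpdf (hν : 0 < ν) (m : ℝ) {l : Filter ℝ}
    (h : Tendsto (fun x => (x - m) ^ 2) l atTop) : Tendsto (gpdf m ν) l (𝓝 0) := by
  have h2 : Tendsto (fun x => -((x - m) ^ 2) / (2 * ν ^ 2)) l atBot := by
    simp only [neg_div]
    exact tendsto_neg_atTop_atBot.comp (h.atTop_div_const (by positivity))
  have h3 : Tendsto (fun x => (Real.sqrt (2 * Real.pi * ν ^ 2))⁻¹ *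
      Real.exp (-((x - m) ^ 2) / (2 * ν ^ 2))) l (𝓝 ((Real.sqrt (2 * Real.pi * ν ^ 2))⁻¹ * 0)) :=
    (Real.tendsto_exp_atBot.comp h2).const_mul _
  rw [mul_zero] at h3; exact h3

lemma tendsto_sq_atTop (m : ℝ) : Tendsto (fun x : ℝ => (x - m) ^ 2) atTop atTop := by
  apply (tendsto_pow_atTop two_ne_zero).comp
  exact tendsto_atTop_add_const_right atTop (-m) tendsto_id |>.congr (fun x => by simp only [id_eq]; ring)

lemma tendsto_sq_atBot (m : ℝ) : Tendsto (fun x : ℝ => (x - m) ^ 2) atBot atTop := by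
  have h : Tendsto (fun x : ℝ => m - x) atBot atTop := by
    apply tendsto_atTop_add_const_left atBot m tendsto_neg_atBot_atTop |>.congr (fun x => by ring)
  exact ((tendsto_pow_atTop two_ne_zero).comp h).congr (fun x => by simp only [Function.comp]; ring)


lemma integral_sub_mul_gpdf (hν : 0 < ν) (m : ℝ) : ∫ x, (x - m) * gpdf m ν x = 0 := by
  have h := integral_of_hasDerivAt_of_tendsto (hasDerivAt_neg_gpdf hν m)
    (integrable_sub_mul_gpdf hν m)
    (((tendsto_gpdf hν m (tendsto_sq_atBot m)).const_mul (-(ν^2))).congr' (by simp) |>.congr (fun x => rfl))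
    (((tendsto_gpdf hν m (tendsto_sq_atTop m)).const_mul (-(ν^2))))
  simpa using h

lemma integral_Ioi_sub_mul_gpdf (hν : 0 < ν) (m y : ℝ) :
    ∫ x in Set.Ioi y, (x - m) * gpdf m ν x = ν ^ 2 * gpdf m ν y := by
  have h := integral_Ioi_of_hasDerivAt_of_tendsto' (a := y) (fun x _ => hasDerivAt_neg_gpdf hν m x)
    (integrable_sub_mul_gpdf hν m).integrableOn
    (((tendsto_gpdf hν m (tendsto_sq_atTop m)).const_mul (-(ν^2))))
  rw [h]; ring

lemma integral_Ioi_gpdf (hν : 0 < ν) (m y : ℝ) :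
    ∫ x in Set.Ioi y, gpdf m ν x = 1 - gcdf m ν y := by
  have h := intervalIntegral.integral_Iic_add_Ioi (b := y) (μ := volume)
    (integrable_gpdf (ν := ν) m).integrableOn (integrable_gpdf (ν := ν) m).integrableOn
  rw [integral_gpdf hν] at h
  rw [gcdf, ← integral_Iic_eq_integral_Iio]
  linarith

lemma closed_form (hν : 0 < ν) (y τ m : ℝ) :
    ∫ η, ((1/2) * |y - η| + (τ - 1/2) * (y - η)) * gpdf m ν η
      = τ * (y - m) + ν ^ 2 * gpdf m ν y + (m - y) * (1 - gcdf m ν y) := by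
  have key : ∀ η, ((1/2) * |y - η| + (τ - 1/2) * (y - η)) * gpdf m ν η
      = τ * ((y - η) * gpdf m ν η)
        + Set.indicator (Set.Ioi y) (fun η => (η - y) * gpdf m ν η) η := by
    intro η
    rcases le_or_gt η y with h | h
    · rw [Set.indicator_of_notMem (by simpa using h), abs_of_nonneg (by linarith)]
      ring
    · rw [Set.indicator_of_mem (by simpa using h), abs_of_nonpos (by linarith)]
      ring
  have hA : Integrable (fun η => (y - η) * gpdf m ν η) := by
    refine (((integrable_gpdf (ν := ν) m).const_mul (y - m)).sub
      (integrable_sub_mul_gpdf hν m)).congr (ae_of_all _ fun η => by simp only [Pi.sub_apply, Pi.add_apply]; ring)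
  have hC : Integrable (fun η => (η - y) * gpdf m ν η) := by
    refine ((integrable_sub_mul_gpdf hν m).add
      ((integrable_gpdf (ν := ν) m).const_mul (m - y))).congr (ae_of_all _ fun η => by simp only [Pi.sub_apply, Pi.add_apply]; ring)
  have hB : Integrable (Set.indicator (Set.Ioi y) (fun η => (η - y) * gpdf m ν η)) :=
    hC.indicator measurableSet_Ioi
  simp_rw [key]
  rw [integral_add (hA.const_mul τ) hB, integral_const_mul, integral_indicator measurableSet_Ioi]
  have h1 : ∫ η, (y - η) * gpdf m ν η = y - m := by
    have : ∀ η, (y - η) * gpdf m ν η = (y - m) * gpdf m ν η - (η - m) * gpdf m ν η :=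
      fun η => by ring
    simp_rw [this]
    rw [integral_sub ((integrable_gpdf (ν := ν) m).const_mul _) (integrable_sub_mul_gpdf hν m),
      integral_const_mul, integral_gpdf hν, integral_sub_mul_gpdf hν]
    ring
  have h2 : ∫ x in Set.Ioi y, (x - y) * gpdf m ν x
      = ν ^ 2 * gpdf m ν y + (m - y) * (1 - gcdf m ν y) := by
    have : ∀ x, (x - y) * gpdf m ν x = (x - m) * gpdf m ν x + (m - y) * gpdf m ν x :=
      fun x => by ring
    simp_rw [this]
    rw [integral_add (integrable_sub_mul_gpdf hν m).integrableOn
        (((integrable_gpdf (ν := ν) m).const_mul _).integrableOn),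
      integral_Ioi_sub_mul_gpdf hν, integral_const_mul, integral_Ioi_gpdf hν]
  rw [h1, h2]
  ring

lemma gcdf_shift (m y : ℝ) : gcdf m ν y = gcdf 0 ν (y - m) := by
  rw [gcdf, gcdf, ← integral_indicator measurableSet_Iio, ← integral_indicator measurableSet_Iio,
    ← integral_add_right_eq_self (fun x => (Set.Iio y).indicator (gpdf m ν) x) m]
  congr 1
  funext x
  by_cases h : x < y - m
  · rw [Set.indicator_of_mem (by simpa using (by linarith : x + m < y)),
      Set.indicator_of_mem (by simpa using h)]
    unfold gpdf
    norm_num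
  · rw [Set.indicator_of_notMem (by simpa using (by linarith : ¬ x + m < y)),
      Set.indicator_of_notMem (by simpa using h)]

lemma hasDerivAt_gcdf0 (hν : 0 < ν) (c : ℝ) : HasDerivAt (gcdf 0 ν) (gpdf 0 ν c) c := by
  have hint := integrable_gpdf (ν := ν) 0
  have key : (gcdf 0 ν) = fun c => gcdf 0 ν 0 + ∫ t in (0:ℝ)..c, gpdf 0 ν t := by
    funext c
    rw [gcdf, gcdf, ← integral_Iic_eq_integral_Iio, ← integral_Iic_eq_integral_Iio,
      ← intervalIntegral.integral_Iic_sub_Iic hint.integrableOn hint.integrableOn]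
    ring
  rw [key]
  exact ((intervalIntegral.integral_hasDerivAt_right (hint.intervalIntegrable)
    ((continuous_gpdf 0).stronglyMeasurableAtFilter _ _)
    (continuous_gpdf 0).continuousAt).const_add _)

lemma hasDerivAt_gcdf (hν : 0 < ν) (y m : ℝ) :
    HasDerivAt (fun m' => gcdf m' ν y) (-(gpdf m ν y)) m := by
  have hfun : (fun m' => gcdf m' ν y) = fun m' => gcdf 0 ν (y - m') :=
    funext fun m' => gcdf_shift m' y
  rw [hfun]
  have h1 : HasDerivAt (fun m' : ℝ => y - m') (-1) m := (hasDerivAt_id m).const_sub y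
  have h2 := (hasDerivAt_gcdf0 hν (y - m)).comp m h1
  convert (config := { preTransparency := .default }) h2 using 1
  unfold gpdf
  norm_num

lemma hasDerivAt_gpdf_y (hν : 0 < ν) (y m : ℝ) :
    HasDerivAt (fun m' => gpdf m' ν y) ((y - m) / ν ^ 2 * gpdf m ν y) m := by
  have h0 : HasDerivAt (fun m' : ℝ => y - m') (-1) m := (hasDerivAt_id m).const_sub y
  have inner : HasDerivAt (fun m' : ℝ => -((y - m') ^ 2) / (2 * ν ^ 2)) ((y - m) / ν ^ 2) m := by
    have h1 := ((h0.pow 2).neg).div_const (2 * ν ^ 2)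
    convert (config := { preTransparency := .default }) h1 using 1
    field_simp
    ring
  have h2 := inner.exp.const_mul (Real.sqrt (2 * Real.pi * ν ^ 2))⁻¹
  convert (config := { preTransparency := .default }) h2 using 1
  unfold gpdf
  ring

end aux


theorem quantile_Psi2 (y τ ν : ℝ) (hτ : τ ∈ Set.Ioo (0 : ℝ) 1) (hν : 0 < ν) (m : ℝ) :
    HasDerivAt
      (deriv (fun m' => ∫ η, ((1 / 2) * |y - η| + (τ - 1 / 2) * (y - η)) * gpdf m' ν η))
      (gpdf m ν y) m := by
  have hderiv : ∀ m' : ℝ, HasDerivAt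
      (fun m'' => τ * (y - m'') + ν ^ 2 * gpdf m'' ν y + (m'' - y) * (1 - gcdf m'' ν y))
      ((1 - τ) - gcdf m' ν y) m' := by
    intro m'
    have h1 : HasDerivAt (fun m'' : ℝ => τ * (y - m'')) (-τ) m' := by
      have h := ((hasDerivAt_id m').const_sub y).const_mul τ
      convert (config := { preTransparency := .default }) h using 1; ring
    have h2 : HasDerivAt (fun m'' => ν ^ 2 * gpdf m'' ν y) ((y - m') * gpdf m' ν y) m' := by
      have h := (hasDerivAt_gpdf_y hν y m').const_mul (ν ^ 2)
      convert (config := { preTransparency := .default }) h using 1; field_simp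
    have h3 : HasDerivAt (fun m'' => (m'' - y) * (1 - gcdf m'' ν y))
        ((1 - gcdf m' ν y) + (m' - y) * gpdf m' ν y) m' := by
      have ha : HasDerivAt (fun m'' : ℝ => m'' - y) 1 m' := (hasDerivAt_id m').sub_const y
      have hb : HasDerivAt (fun m'' => 1 - gcdf m'' ν y) (gpdf m' ν y) m' := by
        have h := (hasDerivAt_gcdf hν y m').const_sub 1
        convert (config := { preTransparency := .default }) h using 1; ring
      have h := ha.mul hb
      convert (config := { preTransparency := .default }) h using 1; ring
    have h := (h1.add h2).add h3
    convert (config := { preTransparency := .default }) h using 1; ring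
  have hF : (fun m' => ∫ η, ((1 / 2) * |y - η| + (τ - 1 / 2) * (y - η)) * gpdf m' ν η)
      = fun m' => τ * (y - m') + ν ^ 2 * gpdf m' ν y + (m' - y) * (1 - gcdf m' ν y) :=
    funext fun m' => closed_form hν y τ m'
  have hd : deriv (fun m' => ∫ η, ((1 / 2) * |y - η| + (τ - 1 / 2) * (y - η)) * gpdf m' ν η)
      = fun m' => (1 - τ) - gcdf m' ν y := by
    rw [hF]; funext m'; exact (hderiv m').deriv
  rw [hd]
  have h := (hasDerivAt_gcdf hν y m).const_sub (1 - τ)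
  convert (config := { preTransparency := .default }) h using 1; ring
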